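/- Assume the social graph G is connected and is not a star graph, and that the graph G_s is ε-trivial (i.e., |x_i(s) − x_j(s)| ≤ ε for all i, j ∈ [n]) at some time s ≥ 0. Then x_i(t) converges to (1/n) ∑_{k ∈ [n]} x_k(0) as t → ∞, for every i ∈ [n]. -/

import Mathlib

open Finset
open scoped Classical

/-- The threshold graph `G_t`: social neighbors whose garbage differs by at most `ε`. -/
def Gt {n : ℕ} (G : SimpleGraph (Fin n)) (x : ℕ → Fin n → ℝ) (ε : ℝ) (t : ℕ) :
    SimpleGraph (Fin n) where
  Adj i j := G.Adj i j ∧ |x t i - x t j| ≤ ε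
  symm := by
    constructor
    intro i j h
    exact ⟨h.1.symm, by rw [abs_sub_comm]; exact h.2⟩
  loopless := by
    constructor
    intro i h
    exact G.irrefl h.1

/-- `|E_t|`: the number of edges of `G_t`. -/
noncomputable def Ecard {n : ℕ} (G : SimpleGraph (Fin n)) (x : ℕ → Fin n → ℝ) (ε : ℝ)
    (t : ℕ) : ℕ :=
  (Gt G x ε t).edgeSet.ncard

/-- `N_i(t)`: the neighbors of `i` in `G_t`, as a finset. -/
noncomputable def Nb {n : ℕ} (G : SimpleGraph (Fin n)) (x : ℕ → Fin n → ℝ) (ε : ℝ)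
    (t : ℕ) (i : Fin n) : Finset (Fin n) :=
  Finset.univ.filter fun j => (Gt G x ε t).Adj i j

/-- The update rule of the garbage disposal game. -/
def Update {n : ℕ} (G : SimpleGraph (Fin n)) (x : ℕ → Fin n → ℝ) (ε : ℝ) : Prop :=
  ∀ t i,
    x (t + 1) i =
      (if (Gt G x ε t).edgeSet.Nonempty then (1 : ℝ) else 0) / (Ecard G x ε t : ℝ) *
          ∑ j ∈ Nb G x ε t i, x t j +
        (1 - ((Nb G x ε t i).card : ℝ) / (Ecard G x ε t : ℝ) *
            (if (Gt G x ε t).edgeSet.Nonempty then (1 : ℝ) else 0)) * x t i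

/-- The Lyapunov functional `Z_t`. -/
noncomputable def Z {n : ℕ} (G : SimpleGraph (Fin n)) (x : ℕ → Fin n → ℝ) (ε : ℝ)
    (t : ℕ) : ℝ :=
  ∑ i, ∑ j,
    max (min (ε ^ 2) ((x t i - x t j) ^ 2)) (ε ^ 2 * if ¬ G.Adj i j then 1 else 0)

/-- `G` is a star graph: some center `c` is adjacent to exactly the other vertices,
and there are no other edges. -/
def IsStar {n : ℕ} (G : SimpleGraph (Fin n)) : Prop :=
  ∃ c : Fin n, ∀ i j : Fin n, G.Adj i j ↔ (i = c ∨ j = c) ∧ i ≠ j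

namespace GDAux

variable {n : ℕ}

def Stoch (Q : Matrix (Fin n) (Fin n) ℝ) : Prop :=
  (∀ i j, 0 ≤ Q i j) ∧ ∀ i, ∑ j, Q i j = 1

lemma Stoch.one : Stoch (1 : Matrix (Fin n) (Fin n) ℝ) := by
  constructor
  · intro i j
    by_cases h : i = j <;> simp [Matrix.one_apply, h]
  · intro i
    simp [Matrix.one_apply]

lemma Stoch.mul {Q R : Matrix (Fin n) (Fin n) ℝ} (hQ : Stoch Q) (hR : Stoch R) :
    Stoch (Q * R) := by
  constructor
  · intro i j
    rw [Matrix.mul_apply]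
    exact Finset.sum_nonneg fun k _ => mul_nonneg (hQ.1 i k) (hR.1 k j)
  · intro i
    simp only [Matrix.mul_apply]
    rw [Finset.sum_comm]
    calc ∑ k, ∑ j, Q i k * R k j = ∑ k, Q i k * ∑ j, R k j := by
          simp [Finset.mul_sum]
      _ = 1 := by simp [hR.2, hQ.2 i]

lemma Stoch.pow {Q : Matrix (Fin n) (Fin n) ℝ} (hQ : Stoch Q) (m : ℕ) : Stoch (Q ^ m) := by
  induction m with
  | zero => simpa using Stoch.one
  | succ m ih => rw [pow_succ]; exact ih.mul hQ

lemma pow_entry_lb {G : SimpleGraph (Fin n)} {Q : Matrix (Fin n) (Fin n) ℝ} {α : ℝ}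
    (hQ : Stoch Q) (hα : 0 ≤ α) (hd : ∀ i, α ≤ Q i i)
    (ha : ∀ i j, G.Adj i j → α ≤ Q i j) :
    ∀ m (i j : Fin n), (∃ w : G.Walk i j, w.length ≤ m) → α ^ m ≤ (Q ^ m) i j := by
  intro m
  induction m with
  | zero =>
      rintro i j ⟨w, hw⟩
      have hij : i = j := w.eq_of_length_eq_zero (Nat.le_zero.mp hw)
      subst hij
      simp [Matrix.one_apply]
  | succ m ih =>
      rintro i j ⟨w, hw⟩
      have hnn := (hQ.pow m).1
      have hpow : (Q ^ (m + 1)) i j = ∑ k, Q i k * (Q ^ m) k j := by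
        rw [pow_succ', Matrix.mul_apply]
      cases w with
      | nil =>
          have h1 : α ^ m ≤ (Q ^ m) i i := ih i i ⟨SimpleGraph.Walk.nil, by simp⟩
          rw [hpow]
          calc α ^ (m + 1) = α * α ^ m := by ring
            _ ≤ Q i i * (Q ^ m) i i :=
                mul_le_mul (hd i) h1 (pow_nonneg hα m) (le_trans hα (hd i))
            _ ≤ ∑ k, Q i k * (Q ^ m) k i :=
                Finset.single_le_sum (fun k _ => mul_nonneg (hQ.1 i k) (hnn k i))
                  (Finset.mem_univ i)
      | cons h p =>
          rename_i c
          have hp : p.length ≤ m := by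
            simp only [SimpleGraph.Walk.length_cons] at hw; omega
          have h1 : α ^ m ≤ (Q ^ m) c j := ih c j ⟨p, hp⟩
          rw [hpow]
          calc α ^ (m + 1) = α * α ^ m := by ring
            _ ≤ Q i c * (Q ^ m) c j :=
                mul_le_mul (ha i c h) h1 (pow_nonneg hα m) (le_trans hα (ha i c h))
            _ ≤ ∑ k, Q i k * (Q ^ m) k j :=
                Finset.single_le_sum (fun k _ => mul_nonneg (hQ.1 i k) (hnn k j))
                  (Finset.mem_univ c)


lemma inf'_le_sup'' (hne : (univ : Finset (Fin n)).Nonempty) (y : Fin n → ℝ) :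
    univ.inf' hne y ≤ univ.sup' hne y := by
  obtain ⟨i, hi⟩ := hne
  exact (Finset.inf'_le y hi).trans (Finset.le_sup' y hi)

noncomputable def Dv (hne : (univ : Finset (Fin n)).Nonempty) (y : Fin n → ℝ) : ℝ :=
  univ.sup' hne y - univ.inf' hne y

lemma Dv_nonneg (hne : (univ : Finset (Fin n)).Nonempty) (y : Fin n → ℝ) :
    0 ≤ Dv hne y :=
  sub_nonneg.mpr (inf'_le_sup'' hne y)

lemma abs_sub_le_Dv (hne : (univ : Finset (Fin n)).Nonempty) (y : Fin n → ℝ) (i j : Fin n) :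
    |y i - y j| ≤ Dv hne y := by
  rw [abs_sub_le_iff]
  constructor
  · exact sub_le_sub (Finset.le_sup' y (mem_univ i)) (Finset.inf'_le y (mem_univ j))
  · exact sub_le_sub (Finset.le_sup' y (mem_univ j)) (Finset.inf'_le y (mem_univ i))

lemma Dv_le_of (hne : (univ : Finset (Fin n)).Nonempty) (y : Fin n → ℝ) {ε : ℝ}
    (h : ∀ i j, |y i - y j| ≤ ε) : Dv hne y ≤ ε := by
  obtain ⟨k, -, hk⟩ := Finset.exists_mem_eq_sup' hne y
  obtain ⟨l, -, hl⟩ := Finset.exists_mem_eq_inf' hne y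
  calc Dv hne y = y k - y l := by rw [Dv, hk, hl]
    _ ≤ |y k - y l| := le_abs_self _
    _ ≤ ε := h k l

lemma abs_sub_const_le_Dv (hne : (univ : Finset (Fin n)).Nonempty) (y : Fin n → ℝ) {c : ℝ}
    (h1 : univ.inf' hne y ≤ c) (h2 : c ≤ univ.sup' hne y) (i : Fin n) :
    |y i - c| ≤ Dv hne y := by
  rw [abs_sub_le_iff]
  constructor
  · exact sub_le_sub (Finset.le_sup' y (mem_univ i)) h1
  · exact sub_le_sub h2 (Finset.inf'_le y (mem_univ i))

lemma row_upper (hne : (univ : Finset (Fin n)).Nonempty) {Q : Matrix (Fin n) (Fin n) ℝ}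
    (hQ : Stoch Q) {β : ℝ} (hent : ∀ i j, β ≤ Q i j) (y : Fin n → ℝ) (i : Fin n) :
    ∑ j, Q i j * y j ≤
      univ.sup' hne y - β * (univ.sup' hne y - univ.inf' hne y) := by
  set a := univ.inf' hne y with ha
  set b := univ.sup' hne y with hb
  have hab : a ≤ b := inf'_le_sup'' hne y
  obtain ⟨j0, -, hj0⟩ := Finset.exists_mem_eq_inf' hne y
  calc ∑ j, Q i j * y j ≤ ∑ j, Q i j * (if j = j0 then a else b) := by
        apply Finset.sum_le_sum
        intro j _
        by_cases h : j = j0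
        · subst h; rw [if_pos rfl, ha, hj0]
        · rw [if_neg h]
          exact mul_le_mul_of_nonneg_left (Finset.le_sup' y (mem_univ j)) (hQ.1 i j)
    _ = b + Q i j0 * (a - b) := by
        have hterm : ∀ j : Fin n, Q i j * (if j = j0 then a else b) =
            Q i j * b + (if j = j0 then Q i j * (a - b) else 0) := by
          intro j; by_cases h : j = j0 <;> simp [h] <;> ring
        rw [Finset.sum_congr rfl fun j _ => hterm j, Finset.sum_add_distrib,
          ← Finset.sum_mul, hQ.2 i, Finset.sum_ite_eq' univ j0 (fun j => Q i j * (a - b))]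
        simp
    _ ≤ b + β * (a - b) := by
        have := mul_le_mul_of_nonpos_right (hent i j0) (sub_nonpos.mpr hab)
        linarith
    _ = b - β * (b - a) := by ring

lemma row_lower (hne : (univ : Finset (Fin n)).Nonempty) {Q : Matrix (Fin n) (Fin n) ℝ}
    (hQ : Stoch Q) {β : ℝ} (hent : ∀ i j, β ≤ Q i j) (y : Fin n → ℝ) (i : Fin n) :
    univ.inf' hne y + β * (univ.sup' hne y - univ.inf' hne y) ≤ ∑ j, Q i j * y j := by
  set a := univ.inf' hne y with ha
  set b := univ.sup' hne y with hb
  have hab : a ≤ b := inf'_le_sup'' hne y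
  obtain ⟨j1, -, hj1⟩ := Finset.exists_mem_eq_sup' hne y
  have step1 : ∑ j, Q i j * (if j = j1 then b else a) ≤ ∑ j, Q i j * y j := by
    apply Finset.sum_le_sum
    intro j _
    by_cases h : j = j1
    · subst h; rw [if_pos rfl, hb, hj1]
    · rw [if_neg h]
      exact mul_le_mul_of_nonneg_left (Finset.inf'_le y (mem_univ j)) (hQ.1 i j)
  have step2 : ∑ j, Q i j * (if j = j1 then b else a) = a + Q i j1 * (b - a) := by
    have hterm : ∀ j : Fin n, Q i j * (if j = j1 then b else a) =
        Q i j * a + (if j = j1 then Q i j * (b - a) else 0) := by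
      intro j; by_cases h : j = j1 <;> simp [h] <;> ring
    rw [Finset.sum_congr rfl fun j _ => hterm j, Finset.sum_add_distrib,
      ← Finset.sum_mul, hQ.2 i, Finset.sum_ite_eq' univ j1 (fun j => Q i j * (b - a))]
    simp
  have step3 : a + β * (b - a) ≤ a + Q i j1 * (b - a) := by
    have := mul_le_mul_of_nonneg_right (hent i j1) (sub_nonneg.mpr hab)
    linarith
  linarith

lemma Dv_app_le (hne : (univ : Finset (Fin n)).Nonempty) {Q : Matrix (Fin n) (Fin n) ℝ}
    (hQ : Stoch Q) {β : ℝ} (hent : ∀ i j, β ≤ Q i j) (y : Fin n → ℝ) :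
    Dv hne (fun i => ∑ j, Q i j * y j) ≤ (1 - 2 * β) * Dv hne y := by
  set a := univ.inf' hne y with ha
  set b := univ.sup' hne y with hb
  have hub : univ.sup' hne (fun i => ∑ j, Q i j * y j) ≤ b - β * (b - a) :=
    Finset.sup'_le hne _ fun i _ => row_upper hne hQ hent y i
  have hlb : a + β * (b - a) ≤ univ.inf' hne (fun i => ∑ j, Q i j * y j) :=
    Finset.le_inf' hne _ fun i _ => row_lower hne hQ hent y i
  have hexp : (1 - 2 * β) * (b - a) = (b - β * (b - a)) - (a + β * (b - a)) := by ring
  rw [Dv, Dv, ← ha, ← hb, hexp]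
  exact sub_le_sub hub hlb


/-- The fixed transition matrix once the graph is trivial. -/
noncomputable def Pm (G : SimpleGraph (Fin n)) : Matrix (Fin n) (Fin n) ℝ :=
  fun i j => if G.Adj i j then ((G.edgeFinset.card : ℝ))⁻¹
    else if i = j then 1 - (G.degree i : ℝ) / (G.edgeFinset.card : ℝ) else 0

section Props

variable {G : SimpleGraph (Fin n)}

lemma degree_le_E (i : Fin n) : G.degree i ≤ G.edgeFinset.card := by
  rw [← SimpleGraph.card_incidenceFinset_eq_degree]
  apply Finset.card_le_card
  intro e he
  rw [SimpleGraph.mem_incidenceFinset] at he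
  rw [SimpleGraph.mem_edgeFinset]
  exact he.1

lemma degree_lt_E (hconn : G.Connected) (hstar : ¬ IsStar G) (i : Fin n) :
    G.degree i < G.edgeFinset.card := by
  rcases lt_or_eq_of_le (degree_le_E i) with h | h
  · exact h
  exfalso
  apply hstar
  -- every edge is incident to i
  have hsub : G.incidenceFinset i ⊆ G.edgeFinset := by
    intro e he
    rw [SimpleGraph.mem_incidenceFinset] at he
    rw [SimpleGraph.mem_edgeFinset]
    exact he.1
  have heq : G.incidenceFinset i = G.edgeFinset := by
    apply Finset.eq_of_subset_of_card_le hsub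
    rw [SimpleGraph.card_incidenceFinset_eq_degree, h]
  have hmem : ∀ a b : Fin n, G.Adj a b → a = i ∨ b = i := by
    intro a b hab
    have : s(a, b) ∈ G.incidenceFinset i := by
      rw [heq, SimpleGraph.mem_edgeFinset]
      exact hab
    rw [SimpleGraph.mem_incidenceFinset] at this
    have := this.2
    rw [Sym2.mem_iff] at this
    tauto
  have hadj : ∀ b : Fin n, b ≠ i → G.Adj i b := by
    intro b hb
    obtain ⟨w⟩ := hconn.preconnected b i
    cases w with
    | nil => exact absurd rfl hb
    | cons hbc p =>
        rename_i c
        rcases hmem b c hbc with h1 | h1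
        · exact absurd h1 hb
        · subst h1; exact hbc.symm
  refine ⟨i, fun a b => ⟨fun hab => ⟨hmem a b hab, hab.ne⟩, ?_⟩⟩
  rintro ⟨hc, hne⟩
  rcases hc with rfl | rfl
  · exact hadj b (Ne.symm hne)
  · exact (hadj a hne).symm

lemma Gt_eq {x : ℕ → Fin n → ℝ} {ε : ℝ} {t : ℕ}
    (htriv : ∀ i j, |x t i - x t j| ≤ ε) : Gt G x ε t = G := by
  ext i j
  exact ⟨fun h => h.1, fun h => ⟨h, htriv i j⟩⟩

lemma Ecard_eq {x : ℕ → Fin n → ℝ} {ε : ℝ} {t : ℕ}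
    (htriv : ∀ i j, |x t i - x t j| ≤ ε) : Ecard G x ε t = G.edgeFinset.card := by
  rw [Ecard, Gt_eq htriv, ← SimpleGraph.coe_edgeFinset, Set.ncard_coe_finset]

lemma Nb_eq {x : ℕ → Fin n → ℝ} {ε : ℝ} {t : ℕ}
    (htriv : ∀ i j, |x t i - x t j| ≤ ε) (i : Fin n) :
    Nb G x ε t i = G.neighborFinset i := by
  ext j
  simp [Nb, Gt_eq htriv, SimpleGraph.mem_neighborFinset]

lemma step_formula {x : ℕ → Fin n → ℝ} {ε : ℝ} (hupd : Update G x ε) {t : ℕ}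
    (htriv : ∀ i j, |x t i - x t j| ≤ ε) (hedge : G.edgeSet.Nonempty) (i : Fin n) :
    x (t + 1) i = ∑ j, Pm G i j * x t j := by
  have hGt : (Gt G x ε t).edgeSet.Nonempty := by rw [Gt_eq htriv]; exact hedge
  have h := hupd t i
  rw [if_pos hGt, Ecard_eq htriv, Nb_eq htriv] at h
  rw [h, SimpleGraph.card_neighborFinset_eq_degree]
  have hsplit : ∀ j : Fin n, Pm G i j * x t j =
      (if j ∈ G.neighborFinset i then ((G.edgeFinset.card : ℝ))⁻¹ * x t j else 0) +
      (if i = j then (1 - (G.degree i : ℝ) / (G.edgeFinset.card : ℝ)) * x t i else 0) := by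
    intro j
    by_cases h2 : i = j
    · subst h2; simp [Pm, SimpleGraph.irrefl]
    · by_cases h1 : G.Adj i j
      · simp [Pm, h1, h2, SimpleGraph.mem_neighborFinset]
      · simp [Pm, h1, h2, SimpleGraph.mem_neighborFinset]
  rw [Finset.sum_congr rfl fun j _ => hsplit j, Finset.sum_add_distrib,
    Finset.sum_ite_eq univ i, Finset.sum_ite_mem, Finset.univ_inter]
  simp [Finset.mul_sum, one_div, mul_comm, Finset.sum_mul]

lemma Pm_rowsum (hE : 0 < G.edgeFinset.card) (i : Fin n) : ∑ j, Pm G i j = 1 := by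
  have hE' : (0 : ℝ) < G.edgeFinset.card := by exact_mod_cast hE
  have hsplit : ∀ j : Fin n, Pm G i j =
      (if j ∈ G.neighborFinset i then ((G.edgeFinset.card : ℝ))⁻¹ else 0) +
      (if i = j then 1 - (G.degree i : ℝ) / (G.edgeFinset.card : ℝ) else 0) := by
    intro j
    by_cases h2 : i = j
    · subst h2; simp [Pm, SimpleGraph.irrefl]
    · by_cases h1 : G.Adj i j
      · simp [Pm, h1, h2, SimpleGraph.mem_neighborFinset]
      · simp [Pm, h1, h2, SimpleGraph.mem_neighborFinset]
  rw [Finset.sum_congr rfl fun j _ => hsplit j, Finset.sum_add_distrib,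
    Finset.sum_ite_eq univ i, Finset.sum_ite_mem, Finset.univ_inter,
    Finset.sum_const, SimpleGraph.card_neighborFinset_eq_degree]
  simp only [mem_univ, if_pos, nsmul_eq_mul]
  field_simp
  ring

lemma Pm_nonneg (hE : 0 < G.edgeFinset.card)
    (hdeg : ∀ i, G.degree i ≤ G.edgeFinset.card) (i j : Fin n) : 0 ≤ Pm G i j := by
  have hE' : (0 : ℝ) < G.edgeFinset.card := by exact_mod_cast hE
  unfold Pm
  split_ifs with h1 h2
  · positivity
  · have : (G.degree i : ℝ) ≤ G.edgeFinset.card := by exact_mod_cast hdeg i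
    have := (div_le_one hE').mpr this
    linarith
  · exact le_rfl

lemma Pm_stoch (hE : 0 < G.edgeFinset.card)
    (hdeg : ∀ i, G.degree i ≤ G.edgeFinset.card) : Stoch (Pm G) :=
  ⟨Pm_nonneg hE hdeg, Pm_rowsum hE⟩

lemma Pm_diag_ge (hE : 0 < G.edgeFinset.card)
    (hdeg : ∀ i, G.degree i < G.edgeFinset.card) (i : Fin n) :
    ((G.edgeFinset.card : ℝ))⁻¹ ≤ Pm G i i := by
  have hE' : (0 : ℝ) < G.edgeFinset.card := by exact_mod_cast hE
  have hdi : (G.degree i : ℝ) + 1 ≤ G.edgeFinset.card := by exact_mod_cast hdeg i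
  have h1 : (G.degree i : ℝ) / G.edgeFinset.card + 1 / G.edgeFinset.card ≤ 1 := by
    rw [← add_div]
    exact (div_le_one hE').mpr hdi
  have : Pm G i i = 1 - (G.degree i : ℝ) / G.edgeFinset.card := by
    simp [Pm, SimpleGraph.irrefl]
  rw [this, inv_eq_one_div]
  linarith

lemma Pm_adj_ge (i j : Fin n) (h : G.Adj i j) :
    ((G.edgeFinset.card : ℝ))⁻¹ ≤ Pm G i j := by
  simp [Pm, h]

end Props

/-- the sum of all garbage is invariant in time, unconditionally -/
lemma sum_invariant {G : SimpleGraph (Fin n)} {x : ℕ → Fin n → ℝ} {ε : ℝ}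
    (hupd : Update G x ε) (t : ℕ) : ∑ i, x (t + 1) i = ∑ i, x t i := by
  set c : ℝ := if (Gt G x ε t).edgeSet.Nonempty then (1 : ℝ) else 0 with hc
  set E : ℝ := (Ecard G x ε t : ℝ) with hE
  have key : ∑ i, ∑ j ∈ Nb G x ε t i, x t j = ∑ i, ((Nb G x ε t i).card : ℝ) * x t i := by
    calc ∑ i, ∑ j ∈ Nb G x ε t i, x t j
        = ∑ i, ∑ j, if (Gt G x ε t).Adj i j then x t j else 0 := by
          simp [Nb, Finset.sum_filter]
      _ = ∑ j, ∑ i, if (Gt G x ε t).Adj i j then x t j else 0 := Finset.sum_comm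
      _ = ∑ j, ∑ i, if (Gt G x ε t).Adj j i then x t j else 0 := by
          refine Finset.sum_congr rfl fun j _ => Finset.sum_congr rfl fun i _ => ?_
          rw [SimpleGraph.adj_comm]
      _ = ∑ j, ((Nb G x ε t j).card : ℝ) * x t j := by
          refine Finset.sum_congr rfl fun j _ => ?_
          rw [Finset.sum_ite, Finset.sum_const_zero, add_zero, Finset.sum_const,
            nsmul_eq_mul]
          norm_cast
  calc ∑ i, x (t + 1) i
      = ∑ i, (c / E * ∑ j ∈ Nb G x ε t i, x t j +
          (1 - ((Nb G x ε t i).card : ℝ) / E * c) * x t i) := by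
        refine Finset.sum_congr rfl fun i _ => ?_
        rw [hupd t i]
    _ = c / E * ∑ i, ∑ j ∈ Nb G x ε t i, x t j +
        ∑ i, (1 - ((Nb G x ε t i).card : ℝ) / E * c) * x t i := by
        rw [Finset.sum_add_distrib, Finset.mul_sum]
    _ = ∑ i, (c / E * (((Nb G x ε t i).card : ℝ) * x t i) +
        (1 - ((Nb G x ε t i).card : ℝ) / E * c) * x t i) := by
        rw [key, Finset.mul_sum, ← Finset.sum_add_distrib]
    _ = ∑ i, x t i := by
        refine Finset.sum_congr rfl fun i _ => ?_
        ring


end GDAux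

/-- Theorem 1: on a connected non-star social graph, if `G_s` is ε-trivial at some time
`s`, then every `x_i(t)` converges to the initial average. -/
theorem convergence_to_average {n : ℕ} (G : SimpleGraph (Fin n)) (x : ℕ → Fin n → ℝ)
    (ε : ℝ) (hε : 0 < ε) (hx0 : ∀ i, 0 ≤ x 0 i) (hupd : Update G x ε)
    (hconn : G.Connected) (hstar : ¬ IsStar G)
    (s : ℕ) (htriv : ∀ i j, |x s i - x s j| ≤ ε) :
    ∀ i : Fin n, Filter.Tendsto (fun t => x t i) Filter.atTop
      (nhds ((∑ k, x 0 k) / (n : ℝ))) := by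
  classical
  open GDAux Filter in
  have hne0 : Nonempty (Fin n) := hconn.nonempty
  have hn : 2 ≤ n := by
    by_contra hlt
    push_neg at hlt
    interval_cases n
    · exact hne0.elim fun i => i.elim0
    · apply hstar
      refine ⟨⟨0, by omega⟩, fun i j => ?_⟩
      have hij : i = j := Subsingleton.elim i j
      subst hij
      simp
  have hneF : (univ : Finset (Fin n)).Nonempty := univ_nonempty
  have hedge : G.edgeSet.Nonempty := by
    obtain ⟨w⟩ := hconn.preconnected ⟨0, by omega⟩ ⟨1, by omega⟩
    cases w with
    | cons h p => exact ⟨_, (SimpleGraph.mem_edgeSet G).mpr h⟩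
  have hE : 0 < G.edgeFinset.card := by
    obtain ⟨e, he⟩ := hedge
    exact Finset.card_pos.mpr ⟨e, SimpleGraph.mem_edgeFinset.mpr he⟩
  set α : ℝ := ((G.edgeFinset.card : ℝ))⁻¹ with hαdef
  have hαpos : 0 < α := by
    have : (0:ℝ) < G.edgeFinset.card := by exact_mod_cast hE
    positivity
  have hdeglt : ∀ i, G.degree i < G.edgeFinset.card := degree_lt_E hconn hstar
  have hP : Stoch (Pm G) := Pm_stoch hE fun i => (hdeglt i).le
  set Q : Matrix (Fin n) (Fin n) ℝ := Pm G ^ n with hQdef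
  have hQ : Stoch Q := hP.pow n
  set β : ℝ := α ^ n with hβdef
  have hβpos : 0 < β := pow_pos hαpos n
  have hQentP : ∀ i j, β ≤ Q i j := by
    intro i j
    have hwalk : ∃ w : G.Walk i j, w.length ≤ n := by
      obtain ⟨w0⟩ := hconn.preconnected i j
      refine ⟨w0.bypass, ?_⟩
      have := w0.bypass_isPath.length_lt
      simp only [Fintype.card_fin] at this
      omega
    exact pow_entry_lb hP hαpos.le (Pm_diag_ge hE hdeglt) (Pm_adj_ge) n i j hwalk
  set κ : ℝ := 1 - 2 * β with hκdef
  have hκ0 : 0 ≤ κ := by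
    have i0 : Fin n := ⟨0, by omega⟩
    have h1 : (n:ℝ) * β ≤ ∑ j, Q i0 j := by
      calc (n:ℝ) * β = ∑ _j : Fin n, β := by
            simp [Finset.sum_const, Finset.card_univ, mul_comm]
        _ ≤ ∑ j, Q i0 j := Finset.sum_le_sum fun j _ => hQentP i0 j
    rw [hQ.2 i0] at h1
    have h2 : 2 * β ≤ (n:ℝ) * β := by
      have : (2:ℝ) ≤ n := by exact_mod_cast hn
      exact mul_le_mul_of_nonneg_right this hβpos.le
    simp only [hκdef]
    linarith
  have hκ1 : κ < 1 := by simp only [hκdef]; linarith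
  -- triviality persists
  have htrivall : ∀ t, ∀ i j, |x (s + t) i - x (s + t) j| ≤ ε := by
    intro t
    induction t with
    | zero => simpa using htriv
    | succ t ih =>
        have hx : x (s + t + 1) = fun i => ∑ j, Pm G i j * x (s + t) j :=
          funext (step_formula hupd ih hedge)
        intro i j
        have h1 : |x (s + t + 1) i - x (s + t + 1) j| ≤ Dv hneF (x (s + t + 1)) :=
          abs_sub_le_Dv hneF _ i j
        have h2 : Dv hneF (x (s + t + 1)) ≤ (1 - 2 * 0) * Dv hneF (x (s + t)) := by
          rw [hx]
          exact Dv_app_le hneF hP (fun i j => by simpa using hP.1 i j) _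
        have h3 : Dv hneF (x (s + t)) ≤ ε := Dv_le_of hneF _ ih
        have : x (s + (t + 1)) = x (s + t + 1) := by rw [Nat.add_assoc]
        rw [this]
        linarith
  have htrivall' : ∀ u, s ≤ u → ∀ i j, |x u i - x u j| ≤ ε := by
    intro u hu
    have := htrivall (u - s)
    rwa [Nat.add_sub_cancel' hu] at this
  have hstepu : ∀ u, s ≤ u → x (u + 1) = fun i => ∑ j, Pm G i j * x u j :=
    fun u hu => funext (step_formula hupd (htrivall' u hu) hedge)
  have hpow : ∀ u, s ≤ u → ∀ m, x (u + m) = fun i => ∑ j, ((Pm G) ^ m) i j * x u j := by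
    intro u hu m
    induction m with
    | zero => funext i; simp [Matrix.one_apply]
    | succ m ih =>
        have h1 : x (u + m + 1) = fun i => ∑ j, Pm G i j * x (u + m) j :=
          hstepu (u + m) (by omega)
        have e : x (u + (m + 1)) = x (u + m + 1) := by rw [Nat.add_assoc]
        rw [e, h1, ih]
        funext i
        rw [pow_succ']
        simp only [Finset.mul_sum]
        rw [Finset.sum_comm]
        refine Finset.sum_congr rfl fun k _ => ?_
        rw [Matrix.mul_apply, Finset.sum_mul]
        refine Finset.sum_congr rfl fun j _ => ?_
        ring
  have hmono : ∀ u v, s ≤ u → u ≤ v → Dv hneF (x v) ≤ Dv hneF (x u) := by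
    intro u v hu huv
    induction v, huv using Nat.le_induction with
    | base => exact le_rfl
    | succ v hv ih =>
        have h2 : Dv hneF (x (v + 1)) ≤ (1 - 2 * 0) * Dv hneF (x v) := by
          rw [hstepu v (hu.trans hv)]
          exact Dv_app_le hneF hP (fun i j => by simpa using hP.1 i j) _
        have : (1 - 2 * 0 : ℝ) * Dv hneF (x v) = Dv hneF (x v) := by ring
        rw [this] at h2
        exact h2.trans ih
  have hdecay : ∀ k, Dv hneF (x (s + n * k)) ≤ κ ^ k * Dv hneF (x s) := by
    intro k
    induction k with
    | zero => simp
    | succ k ih =>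
        have e : s + n * (k + 1) = s + n * k + n := by rw [Nat.mul_succ, Nat.add_assoc]
        have hx : x (s + n * (k + 1)) = fun i => ∑ j, Q i j * x (s + n * k) j := by
          rw [e]; exact hpow (s + n * k) (by omega) n
        rw [hx]
        calc Dv hneF (fun i => ∑ j, Q i j * x (s + n * k) j)
            ≤ κ * Dv hneF (x (s + n * k)) := Dv_app_le hneF hQ hQentP _
          _ ≤ κ * (κ ^ k * Dv hneF (x s)) := mul_le_mul_of_nonneg_left ih hκ0
          _ = κ ^ (k + 1) * Dv hneF (x s) := by ring
  have hsumt : ∀ t, ∑ k, x t k = ∑ k, x 0 k := by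
    intro t
    induction t with
    | zero => rfl
    | succ t ih => rw [sum_invariant hupd t, ih]
  have hnpos : (0:ℝ) < n := by
    have : (2:ℝ) ≤ n := by exact_mod_cast hn
    linarith
  have hcbound : ∀ t, univ.inf' hneF (x t) ≤ (∑ k, x 0 k) / (n : ℝ) ∧
      (∑ k, x 0 k) / (n : ℝ) ≤ univ.sup' hneF (x t) := by
    intro t
    have h1 : (n:ℝ) * univ.inf' hneF (x t) ≤ ∑ k, x t k := by
      calc (n:ℝ) * univ.inf' hneF (x t) = ∑ _k : Fin n, univ.inf' hneF (x t) := by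
            simp [Finset.sum_const, Finset.card_univ, mul_comm]
        _ ≤ ∑ k, x t k := Finset.sum_le_sum fun k _ => Finset.inf'_le _ (mem_univ k)
    have h2 : ∑ k, x t k ≤ (n:ℝ) * univ.sup' hneF (x t) := by
      calc ∑ k, x t k ≤ ∑ _k : Fin n, univ.sup' hneF (x t) :=
            Finset.sum_le_sum fun k _ => Finset.le_sup' _ (mem_univ k)
        _ = (n:ℝ) * univ.sup' hneF (x t) := by
            simp [Finset.sum_const, Finset.card_univ, mul_comm]
    rw [hsumt t] at h1 h2
    constructor
    · rw [le_div_iff₀ hnpos]; linarith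
    · rw [div_le_iff₀ hnpos]; linarith
  intro i
  rw [Metric.tendsto_atTop]
  intro δ hδ
  set M : ℝ := Dv hneF (x s) with hMdef
  have hκtend : Tendsto (fun k : ℕ => κ ^ k * M) atTop (nhds 0) := by
    simpa using (tendsto_pow_atTop_nhds_zero_of_lt_one hκ0 hκ1).mul_const M
  obtain ⟨k, hk⟩ := (hκtend.eventually_lt_const hδ).exists
  refine ⟨s + n * k, fun t ht => ?_⟩
  have hts : s ≤ t := by omega
  have h1 : |x t i - (∑ k, x 0 k) / (n : ℝ)| ≤ Dv hneF (x t) :=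
    abs_sub_const_le_Dv hneF (x t) (hcbound t).1 (hcbound t).2 i
  have h2 : Dv hneF (x t) ≤ Dv hneF (x (s + n * k)) := hmono (s + n * k) t (by omega) ht
  have h3 : Dv hneF (x (s + n * k)) ≤ κ ^ k * M := hdecay k
  rw [Real.dist_eq]
  calc |x t i - (∑ k, x 0 k) / (n : ℝ)| ≤ Dv hneF (x t) := h1
    _ ≤ Dv hneF (x (s + n * k)) := h2
    _ ≤ κ ^ k * M := h3
    _ < δ := hk
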